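/- Suppose the image of m in K is zero (i.e., the characteristic of K divides m), n ≥ 1, and θ^n ≠ 1. Then every x ∈ K^m with (M_m)^n·x = x satisfies Σ_{i=1}^m x_i = 0. -/

import Mathlib

/-- Suppose the image of `m` in `K` is zero, `n ≥ 1`, and `θ^n ≠ 1`. Then every `x ∈ K^m`
with `(M_m)^n·x = x` satisfies `Σ_{i=1}^m x_i = 0`. -/
theorem stmt_9 (K : Type*) [Field K] (θ : K) (m : ℕ) (hm : 1 ≤ m)
    (hmK : (m : K) = 0) (n : ℕ) (hn : 1 ≤ n) (hθn : θ ^ n ≠ 1)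
    (M : Matrix (Fin m) (Fin m) K)
    (hM : ∀ i j : Fin m, M i j =
      if (i : ℕ) = 0 then (if (j : ℕ) = m - 1 then 1 else 0)
      else if (j : ℕ) = (i : ℕ) - 1 then θ
      else if (j : ℕ) = m - 1 then 1 - θ else 0)
    (x : Fin m → K) (hx : (M ^ n).mulVec x = x) :
    ∑ i, x i = 0 := by
  -- m = 1 is impossible since (1:K) ≠ 0
  rcases eq_or_lt_of_le hm with h1 | h2
  · exfalso
    rw [← h1] at hmK
    simpa using hmK
  have hm2 : 2 ≤ m := h2
  -- every column sums to θ
  have hcol : ∀ j : Fin m, ∑ i, M i j = θ := by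
    intro j
    by_cases hj : (j : ℕ) = m - 1
    · have hrw : ∀ i : Fin m, M i j = (1 - θ) + (if (i : ℕ) = 0 then θ else 0) := by
        intro i
        rw [hM]
        by_cases hi : (i : ℕ) = 0
        · simp [hi, hj]
        · have hne : (j : ℕ) ≠ (i : ℕ) - 1 := by
            have := i.isLt
            omega
          rw [if_neg hi, if_neg hne, if_pos hj]
          simp [hi]
      rw [Finset.sum_congr rfl (fun i _ => hrw i), Finset.sum_add_distrib]
      have h1 : ∑ _i : Fin m, (1 - θ) = (m : K) * (1 - θ) := by
        simp [Finset.sum_const, nsmul_eq_mul]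
        ring
      have h2' : ∑ i : Fin m, (if (i : ℕ) = 0 then θ else 0) = θ := by
        rw [Finset.sum_eq_single (⟨0, by omega⟩ : Fin m)]
        · simp
        · intro b _ hb
          have : (b : ℕ) ≠ 0 := fun h => hb (Fin.ext h)
          simp [this]
        · simp
      rw [h1, h2', hmK]
      ring
    · have hjm : (j : ℕ) + 1 < m := by
        have := j.isLt
        omega
      rw [Finset.sum_eq_single (⟨(j : ℕ) + 1, hjm⟩ : Fin m)]
      · rw [hM]; simp
      · intro b _ hb
        rw [hM]
        have hb' : (b : ℕ) ≠ (j : ℕ) + 1 := fun h => hb (Fin.ext h)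
        by_cases hb0 : (b : ℕ) = 0
        · simp [hb0, hj]
        · have : (j : ℕ) ≠ (b : ℕ) - 1 := by omega
          simp [hb0, hj, this]
      · simp
  -- hence Σ(M·y) = θ·Σy
  have hmul : ∀ y : Fin m → K, ∑ i, M.mulVec y i = θ * ∑ i, y i := by
    intro y
    simp only [Matrix.mulVec, dotProduct]
    rw [Finset.sum_comm, Finset.mul_sum]
    refine Finset.sum_congr rfl fun j _ => ?_
    rw [← Finset.sum_mul, hcol j]
  -- iterate: Σ((M^k)·x) = θ^k·Σx
  have hpow : ∀ k : ℕ, ∑ i, (M ^ k).mulVec x i = θ ^ k * ∑ i, x i := by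
    intro k
    induction k with
    | zero => simp [Matrix.mulVec_one]
    | succ k ih =>
      rw [pow_succ', ← Matrix.mulVec_mulVec, hmul, ih, pow_succ']
      ring
  have hs := hpow n
  rw [hx] at hs
  have : (θ ^ n - 1) * ∑ i, x i = 0 := by linear_combination -hs
  rcases mul_eq_zero.mp this with h | h
  · exact absurd (sub_eq_zero.mp h) hθn
  · exact h
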